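/- If f : C → C' is a linear isometric isomorphism (bijective linear map preserving Hamming weight) between two nondegenerate q-ary linear codes of the same length n, then f is the restriction to C of a linear transformation of F_q^n given by a monomial matrix (a product of a permutation matrix and an invertible diagonal matrix). -/

import Mathlib

open LinearMap

section aux

variable {F V : Type*} [Field F] [Fintype F] [AddCommGroup V] [Module F V] [Fintype V]

lemma card_ker_mul_card (φ : V →ₗ[F] F) (hφ : φ ≠ 0) :
    Nat.card (LinearMap.ker φ) * Fintype.card F = Fintype.card V := by
  obtain ⟨v, hv⟩ : ∃ v, φ v ≠ 0 := by
    by_contra h; push_neg at h; exact hφ (LinearMap.ext fun v => by simp [h v])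
  have hsurj : Function.Surjective φ := fun a =>
    ⟨(a / φ v) • v, by simp [map_smul, hv]⟩
  have e : (V ⧸ LinearMap.ker φ) ≃ₗ[F] F := φ.quotKerEquivOfSurjective hsurj
  have h1 : Nat.card V = Nat.card (LinearMap.ker φ) * Nat.card (V ⧸ LinearMap.ker φ) :=
    Submodule.card_eq_card_quotient_mul_card _
  have h2 : Nat.card (V ⧸ LinearMap.ker φ) = Fintype.card F := by
    rw [Nat.card_congr e.toEquiv, Nat.card_eq_fintype_card]
  simp only [Nat.card_eq_fintype_card] at h1 h2 ⊢
  rw [h1, h2]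

end aux

section aux2

set_option linter.unusedSectionVars false

variable {F V : Type*} [Field F] [Fintype F] [AddCommGroup V] [Module F V] [Fintype V]

open Classical in
/-- indicator of membership in a submodule -/
noncomputable def ind (H : Submodule F V) (v : V) : ℕ := if v ∈ H then 1 else 0

lemma ind_mem {H : Submodule F V} {v : V} (h : v ∈ H) : ind H v = 1 := if_pos h
lemma ind_not_mem {H : Submodule F V} {v : V} (h : v ∉ H) : ind H v = 0 := if_neg h

open Classical in
lemma sum_ite_card (p : V → Prop) :
    (∑ v : V, if p v then (1:ℕ) else 0) = Nat.card {v // p v} := by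
  classical
  simp [Finset.sum_boole, Nat.card_eq_fintype_card, Fintype.card_subtype]

lemma submodule_eq_of_le_of_card_le {H K : Submodule F V} (h : H ≤ K)
    (hc : Nat.card K ≤ Nat.card H) : H = K := by
  apply SetLike.coe_injective
  refine Set.eq_of_subset_of_ncard_le h ?_ (Set.toFinite _)
  rwa [← Nat.card_coe_set_eq, ← Nat.card_coe_set_eq]

/-- the property of being a hyperplane (kernel of a nonzero functional) -/
def IsHyp (H : Submodule F V) : Prop := ∃ φ : V →ₗ[F] F, φ ≠ 0 ∧ LinearMap.ker φ = H

lemma card_hyp {H : Submodule F V} (hH : IsHyp H) :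
    Nat.card H * Fintype.card F = Fintype.card V := by
  obtain ⟨φ, hφ, rfl⟩ := hH
  exact card_ker_mul_card φ hφ

/-- Claim A : the self-intersection count. -/
lemma sum_ind_self (H : Submodule F V) :
    ∑ v : V, ind H v * ind H v = Nat.card H := by
  classical
  have h1 : ∀ v : V, ind H v * ind H v = if v ∈ H then 1 else 0 := by
    intro v; unfold ind; split <;> simp_all
  rw [Finset.sum_congr rfl fun v _ => h1 v, sum_ite_card]

/-- Claim B : intersection of distinct hyperplanes. -/
lemma sum_ind_mul_ind {H K : Submodule F V} (hH : IsHyp H) (hK : IsHyp K) (hne : H ≠ K) :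
    (∑ v : V, ind H v * ind K v) * Fintype.card F = Nat.card H := by
  classical
  obtain ⟨ψ, hψ, rfl⟩ := hK
  set ψ' : H →ₗ[F] F := ψ.comp H.subtype with hψ'def
  have hψ'ne : ψ' ≠ 0 := by
    intro h0
    apply hne
    have hle : H ≤ LinearMap.ker ψ := by
      intro x hx
      have := congrFun (congrArg DFunLike.coe h0) ⟨x, hx⟩
      simpa [hψ'def] using this
    refine submodule_eq_of_le_of_card_le hle ?_
    have h1 := card_hyp hH
    have h2 := card_ker_mul_card ψ hψ
    have hq : 0 < Fintype.card F := Fintype.card_pos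
    have : Nat.card (LinearMap.ker ψ) = Nat.card H :=
      Nat.eq_of_mul_eq_mul_right hq (h2.trans h1.symm)
    exact this.le
  have hcard := card_ker_mul_card ψ' hψ'ne
  have hsum : (∑ v : V, ind H v * ind (LinearMap.ker ψ) v)
      = Nat.card (LinearMap.ker ψ') := by
    have h1 : ∀ v : V, ind H v * ind (LinearMap.ker ψ) v
        = @ite ℕ (v ∈ H ∧ ψ v = 0) (Classical.propDecidable _) 1 0 := by
      intro v
      unfold ind
      by_cases h1 : v ∈ H <;> by_cases h2 : v ∈ LinearMap.ker ψ <;>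
        simp_all [LinearMap.mem_ker]
    rw [Finset.sum_congr rfl fun v _ => h1 v, sum_ite_card]
    apply Nat.card_congr
    exact { toFun := fun x => ⟨⟨x.1, x.2.1⟩, LinearMap.mem_ker.mpr x.2.2⟩
            invFun := fun x => ⟨x.1.1, x.1.2, LinearMap.mem_ker.mp x.2⟩
            left_inv := fun x => rfl
            right_inv := fun x => rfl }
  rw [hsum, hcard, Nat.card_eq_fintype_card]

end aux2

section aux3

set_option linter.unusedSectionVars false

variable {F V : Type*} [Field F] [Fintype F] [AddCommGroup V] [Module F V] [Fintype V]

lemma sum_multiset_swap {α : Type*} (s : Multiset α) (f : α → V → ℕ) :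
    ∑ v : V, (s.map (fun a => f a v)).sum = (s.map (fun a => ∑ v : V, f a v)).sum := by
  induction s using Multiset.induction_on with
  | empty => simp
  | cons a s ih => simp [Finset.sum_add_distrib, ih]

lemma multiset_eq (s t : Multiset (Submodule F V))
    (hs : ∀ H ∈ s, IsHyp H) (ht : ∀ H ∈ t, IsHyp H)
    (hcard : Multiset.card s = Multiset.card t)
    (hsum : ∀ v : V, (s.map (fun H => ind H v)).sum = (t.map (fun H => ind H v)).sum) :
    s = t := by
  induction s using Multiset.induction_on generalizing t with
  | empty =>
      simp only [Multiset.card_zero] at hcard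
      rw [eq_comm, ← Multiset.card_eq_zero, ← hcard]
  | cons H₁ s ih =>
      have hH₁ : IsHyp H₁ := hs H₁ (Multiset.mem_cons_self _ _)
      have hq2 : 2 ≤ Fintype.card F := Fintype.one_lt_card
      have hapos : 0 < Nat.card H₁ := Nat.card_pos
      set S : Submodule F V → ℕ := fun K => ∑ v : V, ind H₁ v * ind K v with hS
      have swap : ∀ u : Multiset (Submodule F V),
          ∑ v : V, ind H₁ v * (u.map (fun H => ind H v)).sum = (u.map S).sum := by
        intro u
        rw [← sum_multiset_swap]
        refine Finset.sum_congr rfl fun v _ => ?_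
        rw [← Multiset.sum_map_mul_left]
      have hmem : H₁ ∈ t := by
        by_contra hnot
        have hSt : ∀ K ∈ t, S K * Fintype.card F = Nat.card H₁ := by
          intro K hK
          exact sum_ind_mul_ind hH₁ (ht K hK) (fun h => hnot (h ▸ hK))
        have E : Nat.card H₁ + (s.map S).sum = (t.map S).sum := by
          have E0 : ∑ v : V, ind H₁ v * ((H₁ ::ₘ s).map (fun H => ind H v)).sum
              = ∑ v : V, ind H₁ v * (t.map (fun H => ind H v)).sum :=
            Finset.sum_congr rfl fun v _ => by rw [hsum v]
          rw [swap, swap, Multiset.map_cons, Multiset.sum_cons] at E0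
          have hSH : S H₁ = Nat.card H₁ := sum_ind_self H₁
          rwa [hSH] at E0
        -- multiply by q
        have hR : (t.map S).sum * Fintype.card F = Multiset.card t * Nat.card H₁ := by
          rw [← Multiset.sum_map_mul_right]
          rw [Multiset.map_congr rfl fun K hK => hSt K hK]
          simp [Multiset.map_const', mul_comm]
        have hLb : Multiset.card s * Nat.card H₁ ≤ (s.map S).sum * Fintype.card F := by
          rw [← Multiset.sum_map_mul_right]
          have : ∀ x ∈ s.map (fun K => S K * Fintype.card F), Nat.card H₁ ≤ x := by
            intro x hx
            obtain ⟨K, hK, rfl⟩ := Multiset.mem_map.mp hx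
            by_cases hKH : K = H₁
            · subst hKH
              have : S K = Nat.card K := sum_ind_self K
              rw [this]
              exact Nat.le_mul_of_pos_right _ (by omega)
            · rw [sum_ind_mul_ind hH₁ (hs K (Multiset.mem_cons_of_mem hK)) (Ne.symm hKH)]
          calc Multiset.card s * Nat.card H₁
              = Multiset.card (s.map (fun K => S K * Fintype.card F)) * Nat.card H₁ := by
                rw [Multiset.card_map]
            _ ≤ _ := by
                rw [← smul_eq_mul]
                exact Multiset.card_nsmul_le_sum this
        have hct : Multiset.card t = Multiset.card s + 1 := by
          simp only [Multiset.card_cons] at hcard; omega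
        have hE2 : (Nat.card H₁ + (s.map S).sum) * Fintype.card F
            = (Multiset.card s + 1) * Nat.card H₁ := by
          rw [E, hR, hct]
        nlinarith [Nat.mul_le_mul_left (Nat.card H₁) hq2, hLb, hapos,
          add_mul (Nat.card H₁) (s.map S).sum (Fintype.card F)]
      obtain ⟨t', rfl⟩ := Multiset.exists_cons_of_mem hmem
      have : s = t' := by
        apply ih t' (fun H hH => hs H (Multiset.mem_cons_of_mem hH))
          (fun H hH => ht H (Multiset.mem_cons_of_mem hH))
        · simp only [Multiset.card_cons] at hcard; omega
        · intro v
          have := hsum v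
          simp only [Multiset.map_cons, Multiset.sum_cons] at this
          exact Nat.add_left_cancel this
      rw [this]

end aux3

section aux4

lemma eq_smul_of_ker_eq {F V : Type*} [Field F] [AddCommGroup V] [Module F V]
    {φ ψ : V →ₗ[F] F} (hψ : ψ ≠ 0) (h : LinearMap.ker φ = LinearMap.ker ψ) :
    ∃ a : F, a ≠ 0 ∧ ∀ x, φ x = a * ψ x := by
  obtain ⟨v, hv⟩ : ∃ v, ψ v ≠ 0 := by
    by_contra hco; push_neg at hco
    exact hψ (LinearMap.ext fun v => by simp [hco v])
  have hφv : φ v ≠ 0 := by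
    intro h0
    exact hv (LinearMap.mem_ker.mp (h ▸ LinearMap.mem_ker.mpr h0))
  refine ⟨φ v / ψ v, div_ne_zero hφv hv, fun x => ?_⟩
  have hy : x - (ψ x / ψ v) • v ∈ LinearMap.ker ψ := by
    rw [LinearMap.mem_ker, map_sub, map_smul, smul_eq_mul, div_mul_cancel₀ _ hv, sub_self]
  rw [← h, LinearMap.mem_ker, map_sub, map_smul, smul_eq_mul, sub_eq_zero] at hy
  rw [hy]
  field_simp

lemma exists_perm_of_map_eq {n : ℕ} {α : Type*} {g h : Fin n → α}
    (heq : Multiset.map g Finset.univ.val = Multiset.map h Finset.univ.val) :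
    ∃ σ : Equiv.Perm (Fin n), ∀ i, g i = h (σ i) := by
  classical
  have hcard : ∀ b : α, Fintype.card {i // g i = b} = Fintype.card {i // h i = b} := by
    intro b
    have hc : Multiset.count b (Multiset.map g Finset.univ.val)
        = Multiset.count b (Multiset.map h Finset.univ.val) := by rw [heq]
    rw [Multiset.count_map, Multiset.count_map] at hc
    rw [Fintype.card_subtype, Fintype.card_subtype]
    show Multiset.card (Multiset.filter (fun i => g i = b) Finset.univ.val)
      = Multiset.card (Multiset.filter (fun i => h i = b) Finset.univ.val)
    rw [Multiset.filter_congr (fun x _ => eq_comm), hc,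
      ← Multiset.filter_congr (fun x _ => eq_comm)]
  have e : ∀ b : α, {i // g i = b} ≃ {i // h i = b} := fun b =>
    Fintype.equivOfCardEq (hcard b)
  refine ⟨(Equiv.sigmaFiberEquiv g).symm.trans
    ((Equiv.sigmaCongrRight e).trans (Equiv.sigmaFiberEquiv h)), fun i => ?_⟩
  exact ((e (g i)) ⟨i, rfl⟩).2.symm

end aux4



/-- If `f : C → C'` is a linear isometric isomorphism (a bijective
linear map preserving Hamming weight) between two nondegenerate `q`-ary linear codes of
length `n`, then `f` is the restriction to `C` of a linear transformation of `F^n`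
given by a monomial matrix: there are a permutation `σ` of the coordinates and nonzero
scalars `d i` such that `(f c) i = d i * c (σ i)` for all `c ∈ C` and all `i`. -/
theorem stmt2 {F : Type*} [Field F] [Fintype F] [DecidableEq F] {n : ℕ}
    (C C' : Submodule F (Fin n → F))
    (hC : ∀ i : Fin n, ∃ c ∈ C, c i ≠ 0)
    (hC' : ∀ i : Fin n, ∃ c ∈ C', c i ≠ 0)
    (f : C ≃ₗ[F] C')
    (hf : ∀ c : C, hammingNorm ((f c : Fin n → F)) = hammingNorm (c : Fin n → F)) :
    ∃ (σ : Equiv.Perm (Fin n)) (d : Fin n → Fˣ),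
      ∀ (c : C) (i : Fin n), (f c : Fin n → F) i = (d i : F) * (c : Fin n → F) (σ i) := by
  classical
  haveI : Fintype C := Fintype.ofFinite C
  set g : Fin n → (C →ₗ[F] F) := fun i => (LinearMap.proj i).comp C.subtype with hgdef
  set g' : Fin n → (C →ₗ[F] F) := fun i =>
    (LinearMap.proj i).comp (C'.subtype.comp (f : C →ₗ[F] C')) with hg'def
  have hgapp : ∀ (i : Fin n) (c : C), g i c = (c : Fin n → F) i := fun i c => rfl
  have hg'app : ∀ (i : Fin n) (c : C), g' i c = (f c : Fin n → F) i := fun i c => rfl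
  have hgne : ∀ i, g i ≠ 0 := by
    intro i h0
    obtain ⟨c, hcC, hci⟩ := hC i
    apply hci
    have := congrFun (congrArg DFunLike.coe h0) ⟨c, hcC⟩
    simpa [hgapp] using this
  have hg'ne : ∀ i, g' i ≠ 0 := by
    intro i h0
    obtain ⟨c', hc'C, hci⟩ := hC' i
    apply hci
    have := congrFun (congrArg DFunLike.coe h0) (f.symm ⟨c', hc'C⟩)
    rw [hg'app i (f.symm ⟨c', hc'C⟩)] at this
    rw [LinearEquiv.apply_symm_apply] at this
    exact this
  have sum_ind_eq : ∀ (c : C) (u : Fin n → (C →ₗ[F] F)),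
      ∑ i, ind (LinearMap.ker (u i)) c = n - hammingNorm (fun i => u i c) := by
    intro c u
    have h1 : ∀ i, ind (LinearMap.ker (u i)) c
        = if u i c = 0 then 1 else 0 := by
      intro i
      simp only [ind]
      exact if_congr LinearMap.mem_ker rfl rfl
    rw [Finset.sum_congr rfl fun i _ => h1 i]
    have h2 : (Finset.univ.filter (fun i => u i c = 0)).card
        + (Finset.univ.filter (fun i => ¬ (u i c = 0))).card = n := by
      rw [Finset.card_filter_add_card_filter_not, Finset.card_univ, Fintype.card_fin]
    have h3 : (∑ i, if u i c = 0 then (1:ℕ) else 0)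
        = (Finset.univ.filter (fun i => u i c = 0)).card := (Finset.card_filter _ _).symm
    have h4 : hammingNorm (fun i => u i c)
        = (Finset.univ.filter (fun i => ¬ (u i c = 0))).card := rfl
    omega
  have hsum0 : ∀ c : C, ∑ i, ind (LinearMap.ker (g' i)) c
      = ∑ i, ind (LinearMap.ker (g i)) c := by
    intro c
    rw [sum_ind_eq, sum_ind_eq]
    congr 1
    rw [show (fun i => g' i c) = ((f c : Fin n → F)) from rfl,
      show (fun i => g i c) = ((c : Fin n → F)) from rfl, hf c]
  have hms : Finset.univ.val.map (fun i => LinearMap.ker (g' i))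
      = Finset.univ.val.map (fun i => LinearMap.ker (g i)) := by
    apply multiset_eq
    · intro H hH
      obtain ⟨i, _, rfl⟩ := Multiset.mem_map.mp hH
      exact ⟨g' i, hg'ne i, rfl⟩
    · intro H hH
      obtain ⟨i, _, rfl⟩ := Multiset.mem_map.mp hH
      exact ⟨g i, hgne i, rfl⟩
    · simp
    · intro v
      rw [Multiset.map_map, Multiset.map_map]
      exact hsum0 v
  obtain ⟨σ, hσ⟩ := exists_perm_of_map_eq hms
  have hsc : ∀ i, ∃ a : F, a ≠ 0 ∧ ∀ x, g' i x = a * g (σ i) x := fun i =>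
    eq_smul_of_ker_eq (hgne (σ i)) (hσ i)
  choose a ha hmul using hsc
  refine ⟨σ, fun i => Units.mk0 (a i) (ha i), fun c i => ?_⟩
  have := hmul i c
  simpa [hg'app, hgapp, Units.val_mk0] using this
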